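/- Let r ≥ 1, N ≥ 2, and let A_1,…,A_N : U → M_r(ℂ) be holomorphic on a connected open set U ⊆ ℂ^N all of whose points have pairwise distinct coordinates, satisfying the Schlesinger equation. Define H_i(t) = Σ_{k≠i} Tr(A_i(t) A_k(t))/(t_i − t_k). Then the 1-form Σ_{i=1}^N H_i dt_i is closed: for all i and j, ∂H_i/∂t_j = ∂H_j/∂t_i on U. Consequently a tau function with d log τ = Σ_i H_i dt_i exists locally. -/

import Mathlib

open Matrix Finset

attribute [local instance] Matrix.normedAddCommGroup Matrix.normedSpace

noncomputable def entryCLM (r : ℕ) (p q : Fin r) : Matrix (Fin r) (Fin r) ℂ →L[ℂ] ℂ :=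
  LinearMap.toContinuousLinearMap
    { toFun := fun M => M p q
      map_add' := fun _ _ => rfl
      map_smul' := fun _ _ => rfl }

@[simp] lemma entryCLM_apply (r : ℕ) (p q : Fin r) (M : Matrix (Fin r) (Fin r) ℂ) :
    entryCLM r p q M = M p q := rfl

noncomputable def prjCLM (N : ℕ) (i : Fin N) : (Fin N → ℂ) →L[ℂ] ℂ :=
  ContinuousLinearMap.proj i

@[simp] lemma prjCLM_apply (N : ℕ) (i : Fin N) (t : Fin N → ℂ) : prjCLM N i t = t i := rfl

lemma entry_sum_eq (r : ℕ) (M K : Matrix (Fin r) (Fin r) ℂ) :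
    ∑ p : Fin r, ∑ q : Fin r, M p q * K q p = Matrix.trace (M * K) := by
  simp [Matrix.trace, Matrix.mul_apply, Matrix.diag]

lemma entry_sum_eq' (r : ℕ) (M K : Matrix (Fin r) (Fin r) ℂ) :
    ∑ p : Fin r, ∑ q : Fin r, K q p * M p q = Matrix.trace (M * K) := by
  simp [Matrix.trace, Matrix.mul_apply, Matrix.diag, mul_comm]

lemma trace_lie_self (r : ℕ) (X Y : Matrix (Fin r) (Fin r) ℂ) :
    Matrix.trace (⁅X, Y⁆ * Y) = 0 := by
  rw [Ring.lie_def, Matrix.sub_mul, Matrix.trace_sub, Matrix.trace_mul_cycle X Y Y]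
  ring

lemma trace_mul_lie_self (r : ℕ) (X Y : Matrix (Fin r) (Fin r) ℂ) :
    Matrix.trace (X * ⁅Y, X⁆) = 0 := by
  rw [Ring.lie_def, Matrix.mul_sub, Matrix.trace_sub, ← mul_assoc, ← mul_assoc,
    Matrix.trace_mul_cycle X Y X]
  ring

lemma trace_mul_lie (r : ℕ) (X Y Z : Matrix (Fin r) (Fin r) ℂ) :
    Matrix.trace (X * ⁅Z, Y⁆) = Matrix.trace (X * Z * Y) - Matrix.trace (X * Y * Z) := by
  rw [Ring.lie_def, Matrix.mul_sub, Matrix.trace_sub, ← mul_assoc, ← mul_assoc]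

lemma trace_lie_mul (r : ℕ) (X Y Z : Matrix (Fin r) (Fin r) ℂ) :
    Matrix.trace (⁅X, Y⁆ * Z) = Matrix.trace (X * Y * Z) - Matrix.trace (X * Z * Y) := by
  rw [Ring.lie_def, Matrix.sub_mul, Matrix.trace_sub, Matrix.trace_mul_cycle Y X Z,
    Matrix.trace_mul_cycle Z Y X]

theorem schlesinger_key
    (r N : ℕ)
    (U : Set (Fin N → ℂ)) (hUo : IsOpen U)
    (hUd : ∀ t ∈ U, ∀ i j : Fin N, i ≠ j → t i ≠ t j)
    (A : Fin N → (Fin N → ℂ) → Matrix (Fin r) (Fin r) ℂ)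
    (hA : ∀ i, DifferentiableOn ℂ (A i) U)
    (hSch : ∀ i j : Fin N, ∀ t ∈ U,
        (i ≠ j → fderiv ℂ (A i) t (Pi.single j 1)
            = (t i - t j)⁻¹ • ⁅A i t, A j t⁆) ∧
        fderiv ℂ (A i) t (Pi.single i 1)
            = -∑ k ∈ Finset.univ.erase i, (t i - t k)⁻¹ • ⁅A i t, A k t⁆)
    (H : Fin N → (Fin N → ℂ) → ℂ)
    (hH : ∀ i : Fin N, ∀ t : Fin N → ℂ,
        H i t = ∑ k ∈ Finset.univ.erase i, Matrix.trace (A i t * A k t) / (t i - t k))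
    (i j : Fin N) (hij : i ≠ j) (t : Fin N → ℂ) (ht : t ∈ U) :
    fderiv ℂ (H i) t (Pi.single j 1)
      = Matrix.trace (A i t * A j t) * ((t i - t j) ^ 2)⁻¹ := by
  classical
  set L : Fin N → (Fin N → ℂ) →L[ℂ] Matrix (Fin r) (Fin r) ℂ :=
    fun m => fderiv ℂ (A m) t with hLdef
  have hd : ∀ m, HasFDerivAt (A m) (L m) t := fun m =>
    ((hA m).differentiableAt (hUo.mem_nhds ht)).hasFDerivAt
  have hne : ∀ k : Fin N, k ≠ i → t i - t k ≠ 0 := fun k hk =>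
    sub_ne_zero.2 (hUd t ht i k (Ne.symm hk))
  set Dt : Fin N → ((Fin N → ℂ) →L[ℂ] ℂ) := fun k =>
    ∑ p : Fin r, ∑ q : Fin r,
      (A i t p q • ((entryCLM r q p).comp (L k)) + A k t q p • ((entryCLM r p q).comp (L i)))
    with hDt
  set Dc : Fin N → ((Fin N → ℂ) →L[ℂ] ℂ) := fun k =>
    (-((t i - t k) ^ 2)⁻¹) • (prjCLM N i - prjCLM N k) with hDc
  set D : Fin N → ((Fin N → ℂ) →L[ℂ] ℂ) := fun k =>
    (∑ p : Fin r, ∑ q : Fin r, A i t p q * A k t q p) • Dc k + (t i - t k)⁻¹ • Dt k with hD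
  have hHs : H i = fun s => ∑ k ∈ Finset.univ.erase i,
      (∑ p : Fin r, ∑ q : Fin r, A i s p q * A k s q p) * (s i - s k)⁻¹ := by
    funext s
    rw [hH]
    refine Finset.sum_congr rfl fun k _ => ?_
    rw [div_eq_mul_inv, entry_sum_eq]
  have hder : HasFDerivAt (H i) (∑ k ∈ Finset.univ.erase i, D k) t := by
    rw [hHs]
    refine HasFDerivAt.fun_sum fun k hk => ?_
    have hτ : HasFDerivAt (fun s => ∑ p : Fin r, ∑ q : Fin r, A i s p q * A k s q p) (Dt k) t := by
      refine HasFDerivAt.fun_sum fun p _ => HasFDerivAt.fun_sum fun q _ => ?_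
      exact HasFDerivAt.mul ((entryCLM r p q).hasFDerivAt.comp t (hd i))
        ((entryCLM r q p).hasFDerivAt.comp t (hd k))
    have hc : HasFDerivAt (fun s : Fin N → ℂ => (s i - s k)⁻¹) (Dc k) t := by
      have h1 : HasFDerivAt (fun s : Fin N → ℂ => s i - s k) (prjCLM N i - prjCLM N k) t :=
        ((prjCLM N i).hasFDerivAt.sub (prjCLM N k).hasFDerivAt)
      exact (hasDerivAt_inv (hne k (Finset.ne_of_mem_erase hk))).comp_hasFDerivAt t h1
    exact hτ.mul hc
  rw [hder.fderiv, ContinuousLinearMap.sum_apply]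
  set v : Fin N → ℂ := Pi.single j 1 with hv
  have hvi : v i = 0 := Pi.single_eq_of_ne hij 1
  have hvj : v j = 1 := Pi.single_eq_same j 1
  have hvk : ∀ k : Fin N, k ≠ j → v k = 0 := fun k hk => Pi.single_eq_of_ne hk 1
  have hDval : ∀ k, D k v =
      (∑ p : Fin r, ∑ q : Fin r, A i t p q * A k t q p) * ((-((t i - t k) ^ 2)⁻¹) * (v i - v k))
      + (t i - t k)⁻¹ *
        (∑ p : Fin r, ∑ q : Fin r, (A i t p q * (L k v) q p + A k t q p * (L i v) p q)) := by
    intro k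
    simp only [hD, hDc, hDt, ContinuousLinearMap.add_apply, ContinuousLinearMap.smul_apply,
      ContinuousLinearMap.sum_apply, ContinuousLinearMap.sub_apply,
      ContinuousLinearMap.coe_comp', Function.comp_apply, entryCLM_apply, prjCLM_apply,
      smul_eq_mul]
  have hLi : L i v = (t i - t j)⁻¹ • ⁅A i t, A j t⁆ := (hSch i j t ht).1 hij
  -- the k ≠ i, j terms
  have hmain : ∀ k ∈ (Finset.univ.erase i).erase j,
      D k v = (t i - t j)⁻¹ * ((t j - t k)⁻¹ * Matrix.trace (A i t * ⁅A j t, A k t⁆)) := by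
    intro k hk
    have hkj : k ≠ j := Finset.ne_of_mem_erase hk
    have hki : k ≠ i := Finset.ne_of_mem_erase (Finset.mem_of_mem_erase hk)
    have hLk : L k v = (t k - t j)⁻¹ • ⁅A k t, A j t⁆ := (hSch k j t ht).1 hkj
    rw [hDval k, hvi, hvk k hkj, hLi, hLk]
    have hsplit : (∑ p : Fin r, ∑ q : Fin r,
        (A i t p q * ((t k - t j)⁻¹ • ⁅A k t, A j t⁆) q p
          + A k t q p * ((t i - t j)⁻¹ • ⁅A i t, A j t⁆) p q))
        = (t k - t j)⁻¹ * Matrix.trace (A i t * ⁅A k t, A j t⁆)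
          + (t i - t j)⁻¹ * Matrix.trace (⁅A i t, A j t⁆ * A k t) := by
      rw [← entry_sum_eq, ← entry_sum_eq', Finset.mul_sum, Finset.mul_sum, ← Finset.sum_add_distrib]
      refine Finset.sum_congr rfl fun p _ => ?_
      rw [Finset.mul_sum, Finset.mul_sum, ← Finset.sum_add_distrib]
      refine Finset.sum_congr rfl fun q _ => ?_
      simp [Matrix.smul_apply, smul_eq_mul]
      ring
    rw [hsplit, trace_mul_lie, trace_lie_mul]
    have hx : t i - t j ≠ 0 := sub_ne_zero.2 (hUd t ht i j hij)
    have hz : t i - t k ≠ 0 := hne k hki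
    have hy : t j - t k ≠ 0 := sub_ne_zero.2 (hUd t ht j k (Ne.symm hkj))
    have hzy : t k - t j ≠ 0 := fun h => hy (by linear_combination -h)
    rw [trace_mul_lie]
    field_simp
    ring
  -- the k = j term
  have hjmem : j ∈ Finset.univ.erase i := Finset.mem_erase.2 ⟨Ne.symm hij, Finset.mem_univ j⟩
  have hLj : L j v = -∑ l ∈ Finset.univ.erase j, (t j - t l)⁻¹ • ⁅A j t, A l t⁆ :=
    (hSch j j t ht).2
  have hDj : D j v = Matrix.trace (A i t * A j t) * ((t i - t j) ^ 2)⁻¹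
      - ∑ l ∈ (Finset.univ.erase j).erase i,
          (t i - t j)⁻¹ * ((t j - t l)⁻¹ * Matrix.trace (A i t * ⁅A j t, A l t⁆)) := by
    rw [hDval j, hvi, hvj, hLi, hLj]
    have h1 : (∑ p : Fin r, ∑ q : Fin r,
        (A i t p q * ((-∑ l ∈ Finset.univ.erase j, (t j - t l)⁻¹ • ⁅A j t, A l t⁆) : Matrix (Fin r) (Fin r) ℂ) q p
          + A j t q p * ((t i - t j)⁻¹ • ⁅A i t, A j t⁆) p q))
        = Matrix.trace (A i t * (-∑ l ∈ Finset.univ.erase j, (t j - t l)⁻¹ • ⁅A j t, A l t⁆))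
          + (t i - t j)⁻¹ * Matrix.trace (⁅A i t, A j t⁆ * A j t) := by
      rw [← entry_sum_eq, ← entry_sum_eq', Finset.mul_sum, ← Finset.sum_add_distrib]
      refine Finset.sum_congr rfl fun p _ => ?_
      rw [Finset.mul_sum, ← Finset.sum_add_distrib]
      refine Finset.sum_congr rfl fun q _ => ?_
      simp [Matrix.smul_apply, smul_eq_mul]
      ring
    rw [h1, trace_lie_self, Matrix.mul_neg, Matrix.trace_neg, Matrix.mul_sum,
      Matrix.trace_sum]
    have h2 : ∀ l, Matrix.trace (A i t * ((t j - t l)⁻¹ • ⁅A j t, A l t⁆))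
        = (t j - t l)⁻¹ * Matrix.trace (A i t * ⁅A j t, A l t⁆) := by
      intro l
      rw [Matrix.mul_smul, Matrix.trace_smul, smul_eq_mul]
    simp only [h2]
    have himem : i ∈ Finset.univ.erase j := Finset.mem_erase.2 ⟨hij, Finset.mem_univ i⟩
    rw [← Finset.sum_erase_add _ _ himem, trace_mul_lie_self, entry_sum_eq]
    simp only [mul_zero, add_zero, zero_sub, mul_neg, mul_one, neg_neg, Finset.mul_sum]
    ring
  rw [← Finset.sum_erase_add _ _ hjmem, Finset.sum_congr rfl hmain, hDj,
    Finset.erase_right_comm]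
  ring

/-- **Closedness of the 1-form `Σ H_i dt_i` along the Schlesinger flows.**
If holomorphic `A₁,…,A_N : U → Mₙ(ℂ)` satisfy the Schlesinger equation on a connected open
set `U ⊆ ℂ^N` whose points have pairwise distinct coordinates, then the Hamiltonians
`H_i(t) = Σ_{k≠i} Tr(A_i(t)A_k(t))/(t_i−t_k)` satisfy `∂H_i/∂t_j = ∂H_j/∂t_i` on `U`,
i.e. the 1-form `Σ_i H_i dt_i` is closed (so `d log τ = Σ_i H_i dt_i` is locally solvable). -/
theorem schlesinger_one_form_closed
    (r N : ℕ) (hr : 1 ≤ r) (hN : 2 ≤ N)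
    (U : Set (Fin N → ℂ)) (hUo : IsOpen U) (hUc : IsConnected U)
    (hUd : ∀ t ∈ U, ∀ i j : Fin N, i ≠ j → t i ≠ t j)
    (A : Fin N → (Fin N → ℂ) → Matrix (Fin r) (Fin r) ℂ)
    (hA : ∀ i, DifferentiableOn ℂ (A i) U)
    (hSch : ∀ i j : Fin N, ∀ t ∈ U,
        (i ≠ j → fderiv ℂ (A i) t (Pi.single j 1)
            = (t i - t j)⁻¹ • ⁅A i t, A j t⁆) ∧
        fderiv ℂ (A i) t (Pi.single i 1)
            = -∑ k ∈ Finset.univ.erase i, (t i - t k)⁻¹ • ⁅A i t, A k t⁆)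
    (H : Fin N → (Fin N → ℂ) → ℂ)
    (hH : ∀ i : Fin N, ∀ t : Fin N → ℂ,
        H i t = ∑ k ∈ Finset.univ.erase i, Matrix.trace (A i t * A k t) / (t i - t k)) :
    ∀ i j : Fin N, ∀ t ∈ U,
      fderiv ℂ (H i) t (Pi.single j 1) = fderiv ℂ (H j) t (Pi.single i 1) := by
  intro i j t ht
  by_cases hij : i = j
  · subst hij; rfl
  · rw [schlesinger_key r N U hUo hUd A hA hSch H hH i j hij t ht,
      schlesinger_key r N U hUo hUd A hA hSch H hH j i (Ne.symm hij) t ht,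
      Matrix.trace_mul_comm]
    have h2 : (t i - t j) ^ 2 = (t j - t i) ^ 2 := by ring
    rw [h2]
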